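/- Converse direction of Ville's theorem: if A is a measurable set of infinite binary sequences with fair-coin product measure zero, then there exists a martingale d : List Bool → ℝ≥0 (satisfying d(σ0)+d(σ1)=2·d(σ)) that succeeds on every x ∈ A, i.e. limsup_N d(x|_N) = ∞ for all x ∈ A. -/

import Mathlib

open MeasureTheory Filter

/-- The fair-coin product measure `μ^∞` on infinite binary sequences (pushforward of
Lebesgue measure on `[0,1)` under binary digit extraction). -/
noncomputable def muInf : Measure (ℕ → Bool) :=
  Measure.map (fun (t : ℝ) (n : ℕ) => decide (⌊t * 2 ^ (n + 1)⌋ % 2 = 1))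
    (volume.restrict (Set.Ico (0 : ℝ) 1))

/-- The initial segment `x|_N` (first `N` bits) of an infinite binary sequence. -/
def initSeg (x : ℕ → Bool) (N : ℕ) : List Bool := (List.range N).map x

/-- Ville's theorem, converse direction: for every measurable set `A` of
binary sequences with `μ^∞(A) = 0` there is a martingale `d : List Bool → ℝ≥0`
(`d(σ0) + d(σ1) = 2·d(σ)`) that succeeds on every `x ∈ A`: `limsup_N d(x|_N) = ∞`. -/



noncomputable def vval (σ : List Bool) : ℝ :=
  ∑ i ∈ Finset.range σ.length, if σ.getD i false then (2:ℝ)⁻¹ ^ (i+1) else 0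

lemma vval_nil : vval [] = 0 := by simp [vval]

lemma vval_append (σ : List Bool) (b : Bool) :
    vval (σ ++ [b]) = vval σ + (if b then (2:ℝ)⁻¹ ^ (σ.length+1) else 0) := by
  simp only [vval, List.length_append, List.length_singleton]
  rw [Finset.sum_range_succ]
  congr 1
  · apply Finset.sum_congr rfl
    intro i hi
    rw [Finset.mem_range] at hi
    rw [List.getD_append _ _ _ _ hi]
  · rw [List.getD_append_right _ _ _ _ (le_refl _)]
    simp

lemma initSeg_length (x : ℕ → Bool) (N : ℕ) : (initSeg x N).length = N := by
  simp [initSeg]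

lemma initSeg_succ (x : ℕ → Bool) (N : ℕ) :
    initSeg x (N+1) = initSeg x N ++ [x N] := by
  simp [initSeg, List.range_succ]

lemma initSeg_getD (x : ℕ → Bool) (N i : ℕ) (hi : i < N) :
    (initSeg x N).getD i false = x i := by
  simp [initSeg, List.getD_eq_getElem?_getD, List.getElem?_map, List.getElem?_range hi]

lemma vval_initSeg (x : ℕ → Bool) (N : ℕ) :
    vval (initSeg x N) = ∑ i ∈ Finset.range N, (if x i then (2:ℝ)⁻¹ ^ (i+1) else 0) := by
  rw [vval, initSeg_length]
  exact Finset.sum_congr rfl fun i hi => by rw [initSeg_getD x N i (Finset.mem_range.mp hi)]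

noncomputable def dyad (σ : List Bool) : Set ℝ :=
  Set.Ico (vval σ) (vval σ + (2:ℝ)⁻¹ ^ σ.length)

lemma dyad_split (σ : List Bool) :
    dyad (σ ++ [false]) ∪ dyad (σ ++ [true]) = dyad σ ∧
    Disjoint (dyad (σ ++ [false])) (dyad (σ ++ [true])) := by
  have h2 : (2:ℝ)⁻¹ ^ (σ.length + 1) + (2:ℝ)⁻¹ ^ (σ.length + 1) = (2:ℝ)⁻¹ ^ σ.length := by
    ring
  have hf : vval (σ ++ [false]) = vval σ := by simp [vval_append]
  have ht : vval (σ ++ [true]) = vval σ + (2:ℝ)⁻¹ ^ (σ.length+1) := by simp [vval_append]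
  have hp : (2:ℝ)⁻¹ ^ (σ.length+1) > 0 := by positivity
  constructor
  · rw [dyad, dyad, dyad, hf, ht]
    simp only [List.length_append, List.length_singleton]
    have hle : (2:ℝ)⁻¹ ^ (σ.length+1) ≤ (2:ℝ)⁻¹ ^ σ.length := by nlinarith
    rw [Set.Ico_union_Ico_eq_Ico (by linarith) (by linarith)]
    rw [add_assoc, h2]
  · rw [dyad, dyad, hf, ht]
    simp only [List.length_append, List.length_singleton]
    exact Set.Ico_disjoint_Ico_same

lemma dyad_measure_split (σ : List Bool) (U : Set ℝ) (hU : MeasurableSet U) :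
    volume (dyad (σ ++ [false]) ∩ U) + volume (dyad (σ ++ [true]) ∩ U)
      = volume (dyad σ ∩ U) := by
  obtain ⟨hu, hd⟩ := dyad_split σ
  rw [← hu, Set.union_inter_distrib_right]
  rw [measure_union (hd.mono Set.inter_subset_left Set.inter_subset_left)
    (measurableSet_Ico.inter hU)]

lemma dyad_volume (σ : List Bool) : volume (dyad σ) = (2:ENNReal)⁻¹ ^ σ.length := by
  rw [dyad, Real.volume_Ico]
  simp only [add_sub_cancel_left]
  rw [ENNReal.ofReal_pow (by norm_num)]
  congr 1
  rw [show ((2:ℝ)⁻¹) = 1/2 by norm_num, ENNReal.ofReal_div_of_pos (by norm_num)]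
  simp

-- integer valued
lemma vval_int (σ : List Bool) : ∃ m : ℤ, vval σ = m * (2:ℝ)⁻¹ ^ σ.length := by
  induction σ using List.reverseRecOn with
  | nil => exact ⟨0, by simp [vval]⟩
  | append_singleton σ b ih =>
    obtain ⟨m, hm⟩ := ih
    refine ⟨2 * m + (if b then 1 else 0), ?_⟩
    rw [vval_append, hm]
    simp only [List.length_append, List.length_singleton]
    push_cast
    cases b <;> simp <;> ring

noncomputable def fdig (t : ℝ) (n : ℕ) : Bool := decide (⌊t * 2 ^ (n + 1)⌋ % 2 = 1)

lemma fdig_meas : Measurable (fun t => fdig t) := by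
  apply measurable_pi_lambda
  intro n
  have h1 : Measurable (fun t : ℝ => ⌊t * 2 ^ (n + 1)⌋) :=
    (measurable_id.mul_const _).floor
  exact (measurable_from_top (f := fun m : ℤ => decide (m % 2 = 1))).comp h1

-- floor doubling
lemma floor_double (s : ℝ) : ⌊2*s⌋ = 2*⌊s⌋ + (⌊2*s⌋ - 2*⌊s⌋) := by ring

lemma floor_double_mem (s : ℝ) : ⌊2*s⌋ - 2*⌊s⌋ = 0 ∨ ⌊2*s⌋ - 2*⌊s⌋ = 1 := by
  have h1 : 2*⌊s⌋ ≤ ⌊2*s⌋ := by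
    apply Int.le_floor.mpr
    push_cast
    nlinarith [Int.floor_le s]
  have h2 : ⌊2*s⌋ < 2*⌊s⌋ + 2 := by
    apply Int.floor_lt.mpr
    push_cast
    nlinarith [Int.lt_floor_add_one s]
  omega

lemma vval_fdig (t : ℝ) (ht : t ∈ Set.Ico (0:ℝ) 1) (N : ℕ) :
    vval (initSeg (fdig t) N) = ⌊t * 2^N⌋ * (2:ℝ)⁻¹ ^ N := by
  obtain ⟨ht0, ht1⟩ := ht
  induction N with
  | zero =>
    simp only [initSeg, List.range_zero, List.map_nil, pow_zero, mul_one]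
    rw [show vval [] = 0 from by simp [vval]]
    rw [Int.floor_eq_zero_iff.mpr (by constructor <;> simpa)]
    simp
  | succ N ih =>
    rw [initSeg_succ, vval_append, ih, initSeg_length]
    set s := t * 2^N with hs
    have h2s : t * 2^(N+1) = 2 * s := by rw [hs]; ring
    set r := ⌊2*s⌋ - 2*⌊s⌋ with hr
    have hrm : r = 0 ∨ r = 1 := floor_double_mem s
    have hfl : ⌊t * 2^(N+1)⌋ = 2*⌊s⌋ + r := by rw [h2s]; ring
    have hmod : ⌊t * 2^(N+1)⌋ % 2 = r := by
      rw [hfl]; rcases hrm with h | h <;> omega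
    have hdig : fdig t N = decide (r = 1) := by
      rw [fdig, hmod]
    rw [hdig, hfl]
    have hp : (2:ℝ)⁻¹ ^ (N+1) ≠ 0 := by positivity
    rcases hrm with h | h <;> rw [h] <;> simp <;> push_cast <;> ring

lemma mem_dyad_gen (t : ℝ) (σ : List Bool)
    (h1 : vval σ * 2 ^ σ.length ≤ t * 2 ^ σ.length)
    (h2 : t * 2 ^ σ.length < vval σ * 2 ^ σ.length + 1) : t ∈ dyad σ := by
  have hpow : (0:ℝ) < 2 ^ σ.length := by positivity
  have hinv : (2:ℝ)⁻¹ ^ σ.length * 2 ^ σ.length = 1 := by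
    rw [← mul_pow]; norm_num
  constructor
  · nlinarith
  · nlinarith

lemma mem_dyad_fdig (t : ℝ) (ht : t ∈ Set.Ico (0:ℝ) 1) (N : ℕ) :
    t ∈ dyad (initSeg (fdig t) N) := by
  apply mem_dyad_gen
  all_goals rw [vval_fdig t ht N, initSeg_length]
  all_goals have hinv : (2:ℝ)⁻¹ ^ N * 2 ^ N = 1 := by rw [← mul_pow]; norm_num
  all_goals have hq : (⌊t * 2^N⌋:ℝ) * 2⁻¹ ^ N * 2 ^ N = (⌊t * 2^N⌋:ℝ) := by rw [mul_assoc, hinv, mul_one]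
  · rw [hq]; exact Int.floor_le (t * 2^N)
  · rw [hq]; exact Int.lt_floor_add_one (t * 2^N)

lemma fdig_eq_of_mem_dyad (t : ℝ) (x : ℕ → Bool) (ht : t ∈ Set.Ico (0:ℝ) 1)
    (h : ∀ N, t ∈ dyad (initSeg x N)) : fdig t = x := by
  have key : ∀ N, vval (initSeg (fdig t) N) = vval (initSeg x N) := by
    intro N
    obtain ⟨m, hm⟩ := vval_int (initSeg x N)
    rw [initSeg_length] at hm
    obtain ⟨h1, h2⟩ := h N
    rw [initSeg_length] at h2
    have hpow : (0:ℝ) < 2 ^ N := by positivity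
    have hinv : (2:ℝ)⁻¹ ^ N * 2 ^ N = 1 := by rw [← mul_pow]; norm_num
    have hmleft : (m:ℝ) ≤ t * 2 ^ N := by
      have := mul_le_mul_of_nonneg_right h1 hpow.le
      rw [hm, mul_assoc, hinv, mul_one] at this
      linarith
    have hright : t * 2 ^ N < m + 1 := by
      have := mul_lt_mul_of_pos_right h2 hpow
      rw [add_mul, hm, mul_assoc, hinv, mul_one] at this
      linarith
    have hfloor : ⌊t * 2 ^ N⌋ = m := by
      rw [Int.floor_eq_iff]
      exact ⟨hmleft, by push_cast; linarith⟩
    rw [vval_fdig t ht N, hfloor, ← hm]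
  funext n
  have e1 := key n
  have e2 := key (n+1)
  rw [initSeg_succ, initSeg_succ, vval_append, vval_append, initSeg_length,
    initSeg_length, e1] at e2
  have e3 : (if fdig t n then (2:ℝ)⁻¹ ^ (n+1) else 0) = (if x n then (2:ℝ)⁻¹ ^ (n+1) else 0) := by
    linarith
  have hp : (2:ℝ)⁻¹ ^ (n+1) ≠ 0 := by positivity
  cases hx : x n <;> cases hf : fdig t n <;> rw [hx, hf] at e3 <;> simp_all

lemma tsum_mem_dyad (x : ℕ → Bool) (hx : ∀ m, ∃ j, m ≤ j ∧ x j = false) :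
    ∀ N, (∑' i, if x i then (2:ℝ)⁻¹ ^ (i+1) else 0) ∈ dyad (initSeg x N) := by
  set c : ℕ → ℝ := fun i => if x i then (2:ℝ)⁻¹ ^ (i+1) else 0 with hc
  have hnn : ∀ i, 0 ≤ c i := by intro i; rw [hc]; positivity
  have hle : ∀ i, c i ≤ (2:ℝ)⁻¹ ^ (i+1) := by
    intro i; rw [hc]; dsimp only; split_ifs; exacts [le_rfl, by positivity]
  have hgeo : Summable (fun i : ℕ => (2:ℝ)⁻¹ ^ i) :=
    summable_geometric_of_lt_one (by norm_num) (by norm_num)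
  have hsumg : Summable (fun i : ℕ => (2:ℝ)⁻¹ ^ (i+1)) := by
    simpa only [pow_succ] using hgeo.mul_right (2:ℝ)⁻¹
  have hsc : Summable c := Summable.of_nonneg_of_le hnn hle hsumg
  have htigeo : ∀ N : ℕ, (∑' i : ℕ, (2:ℝ)⁻¹ ^ (i + N + 1)) = (2:ℝ)⁻¹ ^ N := by
    intro N
    have : ∀ i : ℕ, (2:ℝ)⁻¹ ^ (i + N + 1) = (2:ℝ)⁻¹ ^ i * (2:ℝ)⁻¹ ^ (N+1) := by
      intro i; rw [← pow_add]; ring_nf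
    rw [tsum_congr this, tsum_mul_right, tsum_geometric_of_lt_one (by norm_num) (by norm_num)]
    have : ((1:ℝ) - 2⁻¹)⁻¹ = 2 := by norm_num
    rw [this, pow_succ]
    ring
  intro N
  have hsplit : ∑ i ∈ Finset.range N, c i + ∑' i, c (i + N) = ∑' i, c i :=
    Summable.sum_add_tsum_nat_add N hsc
  have hvv : vval (initSeg x N) = ∑ i ∈ Finset.range N, c i := vval_initSeg x N
  have htail_nn : 0 ≤ ∑' i, c (i + N) := tsum_nonneg (fun i => hnn _)
  have htail_lt : ∑' i, c (i + N) < (2:ℝ)⁻¹ ^ N := by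
    obtain ⟨j, hjN, hjf⟩ := hx N
    rw [← htigeo N]
    have hsumtail : Summable (fun i : ℕ => (2:ℝ)⁻¹ ^ (i + N + 1)) := by
      have := hgeo.comp_injective (add_left_injective (N+1))
      simpa [Function.comp_def, add_assoc] using this
    apply Summable.tsum_lt_tsum (i := j - N) (fun i => hle (i + N)) ?_ (hsc.comp_injective (add_left_injective N)) hsumtail
    have hje : j - N + N = j := Nat.sub_add_cancel hjN
    rw [hc]
    dsimp only
    rw [hje, hjf]
    simp
  constructor
  · rw [hvv, ← hsplit]; linarith
  · rw [initSeg_length, hvv, ← hsplit]; linarith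

noncomputable def gmart (i : ℕ) (σ : List Bool) : ENNReal :=
  if σ.length ≤ i then 2⁻¹ ^ i
  else if ∀ j, i ≤ j → j < σ.length → σ.getD j false = true then 2 ^ σ.length * 2⁻¹ ^ (2*i) else 0

lemma gmart_of_le (i : ℕ) (σ : List Bool) (h : σ.length ≤ i) : gmart i σ = 2⁻¹ ^ i := by
  rw [gmart, if_pos h]

lemma gmart_of_all (i : ℕ) (σ : List Bool) (h : i < σ.length)
    (hall : ∀ j, i ≤ j → j < σ.length → σ.getD j false = true) :
    gmart i σ = 2 ^ σ.length * 2⁻¹ ^ (2*i) := by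
  rw [gmart, if_neg (by omega), if_pos hall]

lemma gmart_of_not (i : ℕ) (σ : List Bool) (h : i < σ.length)
    (hnot : ¬ ∀ j, i ≤ j → j < σ.length → σ.getD j false = true) :
    gmart i σ = 0 := by
  rw [gmart, if_neg (by omega), if_neg hnot]

lemma two_pow_mul_inv_pow (n : ℕ) : (2:ENNReal) ^ n * 2⁻¹ ^ n = 1 := by
  rw [← mul_pow, ENNReal.mul_inv_cancel (by norm_num) (by norm_num), one_pow]

lemma two_pow_mul_inv_pow_le (a b : ℕ) (h : b ≤ a) :
    (2:ENNReal) ^ a * 2⁻¹ ^ b = 2 ^ (a - b) := by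
  conv_lhs => rw [show a = (a - b) + b by omega]
  rw [pow_add, mul_assoc, two_pow_mul_inv_pow, mul_one]

lemma key2 (n : ℕ) : (2:ENNReal) ^ (n+1) * 2⁻¹ ^ (2*n) = 2 * 2⁻¹ ^ n := by
  have h := two_pow_mul_inv_pow n
  calc (2:ENNReal) ^ (n+1) * 2⁻¹ ^ (2*n) = (2^n * 2⁻¹^n) * (2 * 2⁻¹^n) := by
        rw [pow_succ, two_mul, pow_add]; ring
    _ = 2 * 2⁻¹^n := by rw [h, one_mul]

lemma getD_append_lt (σ : List Bool) (b : Bool) (j : ℕ) (hj : j < σ.length) :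
    (σ ++ [b]).getD j false = σ.getD j false := List.getD_append _ _ _ _ hj

lemma getD_append_self (σ : List Bool) (b : Bool) :
    (σ ++ [b]).getD σ.length false = b := by
  rw [List.getD_append_right _ _ _ _ (le_refl _)]
  simp

lemma gmart_mart (i : ℕ) (σ : List Bool) :
    gmart i (σ ++ [false]) + gmart i (σ ++ [true]) = 2 * gmart i σ := by
  have hlen : ∀ b : Bool, (σ ++ [b]).length = σ.length + 1 := by simp
  rcases lt_or_ge σ.length i with h | h
  · rw [gmart_of_le i _ (by rw [hlen]; omega), gmart_of_le i _ (by rw [hlen]; omega),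
      gmart_of_le i σ (by omega), two_mul]
  rcases eq_or_lt_of_le h with h' | h'
  · -- i = σ.length
    have hfalse : gmart i (σ ++ [false]) = 0 := by
      apply gmart_of_not i _ (by rw [hlen]; omega)
      intro hcon
      have := hcon σ.length (by omega) (by rw [hlen]; omega)
      rw [getD_append_self] at this
      exact absurd this (by simp)
    have htrue : gmart i (σ ++ [true]) = 2 ^ (σ.length + 1) * 2⁻¹ ^ (2*i) := by
      rw [gmart_of_all i _ (by rw [hlen]; omega) ?_, hlen]
      intro j h1 h2
      rw [hlen] at h2
      have hj : j = σ.length := by omega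
      subst hj
      exact getD_append_self σ true
    rw [hfalse, htrue, gmart_of_le i σ (by omega), zero_add, ← h', key2]
  · -- i < σ.length
    by_cases hP : ∀ j, i ≤ j → j < σ.length → σ.getD j false = true
    · have hfalse : gmart i (σ ++ [false]) = 0 := by
        apply gmart_of_not i _ (by rw [hlen]; omega)
        intro hcon
        have := hcon σ.length (by omega) (by rw [hlen]; omega)
        rw [getD_append_self] at this
        exact absurd this (by simp)
      have htrue : gmart i (σ ++ [true]) = 2 ^ (σ.length + 1) * 2⁻¹ ^ (2*i) := by
        rw [gmart_of_all i _ (by rw [hlen]; omega) ?_, hlen]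
        intro j h1 h2
        rw [hlen] at h2
        rcases lt_or_ge j σ.length with hj | hj
        · rw [getD_append_lt _ _ _ hj]; exact hP j h1 hj
        · have hje : j = σ.length := by omega
          subst hje
          exact getD_append_self σ true
      rw [hfalse, htrue, gmart_of_all i σ h' hP, zero_add, pow_succ]
      ring
    · push_neg at hP
      obtain ⟨j, hj1, hj2, hj3⟩ := hP
      have hnone : ∀ b : Bool, gmart i (σ ++ [b]) = 0 := by
        intro b
        apply gmart_of_not i _ (by rw [hlen]; omega)
        intro hcon
        have := hcon j hj1 (by rw [hlen]; omega)
        rw [getD_append_lt _ _ _ hj2] at this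
        exact hj3 this
      rw [hnone, hnone, gmart_of_not i σ h' (fun hcon => hj3 (hcon j hj1 hj2))]
      simp

lemma gmart_le (i : ℕ) (σ : List Bool) : gmart i σ ≤ 2 ^ σ.length * 2⁻¹ ^ i := by
  rw [gmart]
  split_ifs with h1 h2
  · exact le_mul_of_one_le_left (zero_le) (one_le_pow_of_one_le' (one_le_two : (1:ENNReal) ≤ 2) _)
  · exact mul_le_mul_right (pow_le_pow_right_of_le_one' (by norm_num) (by omega)) _
  · exact zero_le

noncomputable def dkfun (U : Set ℝ) (σ : List Bool) : ENNReal :=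
  2 ^ σ.length * volume (dyad σ ∩ U)

lemma dkfun_mart (U : Set ℝ) (hU : MeasurableSet U) (σ : List Bool) :
    dkfun U (σ ++ [false]) + dkfun U (σ ++ [true]) = 2 * dkfun U σ := by
  rw [dkfun, dkfun, dkfun]
  simp only [List.length_append, List.length_singleton]
  rw [← mul_add, dyad_measure_split σ U hU, pow_succ]
  ring

lemma dkfun_le (U : Set ℝ) (σ : List Bool) : dkfun U σ ≤ 2 ^ σ.length * volume U :=
  mul_le_mul_right (measure_mono (fun _ h => h.2)) _

lemma dkfun_full (U : Set ℝ) (σ : List Bool) (h : dyad σ ⊆ U) : dkfun U σ = 1 := by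
  rw [dkfun, Set.inter_eq_left.mpr h, dyad_volume, two_pow_mul_inv_pow]

noncomputable def Dfun (U : ℕ → Set ℝ) (σ : List Bool) : ENNReal :=
  (∑' k, 2 ^ k * dkfun (U k) σ) + ∑' i, gmart i σ

lemma Dfun_mart (U : ℕ → Set ℝ) (hU : ∀ k, MeasurableSet (U k)) (σ : List Bool) :
    Dfun U (σ ++ [false]) + Dfun U (σ ++ [true]) = 2 * Dfun U σ := by
  rw [Dfun, Dfun, Dfun, add_add_add_comm, mul_add]
  congr 1
  · rw [← ENNReal.tsum_add, ← ENNReal.tsum_mul_left]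
    apply tsum_congr
    intro k
    rw [← mul_add, dkfun_mart (U k) (hU k) σ]
    ring
  · rw [← ENNReal.tsum_add, ← ENNReal.tsum_mul_left]
    exact tsum_congr fun i => gmart_mart i σ

lemma tsum_inv_two_pow : (∑' k : ℕ, (2:ENNReal)⁻¹ ^ k) = 2 := by
  rw [ENNReal.tsum_geometric, ENNReal.one_sub_inv_two, inv_inv]

lemma Dfun_ne_top (U : ℕ → Set ℝ) (hU : ∀ k, volume (U k) ≤ 2⁻¹ ^ (2*k)) (σ : List Bool) :
    Dfun U σ ≠ ⊤ := by
  have hsum : (∑' k : ℕ, (2:ENNReal) ^ σ.length * 2⁻¹ ^ k) = 2 ^ σ.length * 2 := by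
    rw [ENNReal.tsum_mul_left, tsum_inv_two_pow]
  have hc : ∀ k : ℕ, (2:ENNReal) ^ k * 2⁻¹ ^ (2*k) = 2⁻¹ ^ k := by
    intro k
    rw [two_mul, pow_add, ← mul_assoc, two_pow_mul_inv_pow, one_mul]
  have hA : (∑' k, 2 ^ k * dkfun (U k) σ) ≤ 2 ^ σ.length * 2 := by
    refine (ENNReal.tsum_le_tsum (fun k => ?_)).trans_eq hsum
    calc 2 ^ k * dkfun (U k) σ ≤ 2 ^ k * (2 ^ σ.length * 2⁻¹ ^ (2*k)) := by
          apply mul_le_mul_right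
          exact (dkfun_le (U k) σ).trans (mul_le_mul_right (hU k) _)
      _ = 2 ^ σ.length * (2 ^ k * 2⁻¹ ^ (2*k)) := by ring
      _ = 2 ^ σ.length * 2⁻¹ ^ k := by rw [hc k]
  have hB : (∑' i, gmart i σ) ≤ 2 ^ σ.length * 2 := by
    refine (ENNReal.tsum_le_tsum (fun i => ?_)).trans_eq hsum
    exact gmart_le i σ
  intro hcon
  have := add_le_add hA hB
  rw [← Dfun, hcon] at this
  simp only [top_le_iff] at this
  have h2 : (2:ENNReal) ^ σ.length * 2 + 2 ^ σ.length * 2 ≠ ⊤ := by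
    apply ENNReal.add_ne_top.mpr
    constructor <;> exact ENNReal.mul_ne_top (ENNReal.pow_ne_top (by norm_num)) (by norm_num)
  exact h2 this

lemma dyad_nil : dyad [] = Set.Ico (0:ℝ) 1 := by
  rw [dyad]
  norm_num [vval]

lemma gmart_lower (x : ℕ → Bool) (m N : ℕ) (hall : ∀ j, m ≤ j → x j = true) (hN : m < N) :
    gmart m (initSeg x N) = 2 ^ N * 2⁻¹ ^ (2*m) := by
  rw [gmart_of_all m _ (by rw [initSeg_length]; omega) ?_, initSeg_length]
  intro j h1 h2
  rw [initSeg_length] at h2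
  rw [initSeg_getD x N j h2]
  exact hall j h1

lemma eventually_dyad_subset (x : ℕ → Bool) (t : ℝ) (ht : ∀ N, t ∈ dyad (initSeg x N))
    (U : Set ℝ) (hU : IsOpen U) (htU : t ∈ U) :
    ∀ᶠ N in atTop, dyad (initSeg x N) ⊆ U := by
  obtain ⟨ε, hε, hball⟩ := Metric.isOpen_iff.mp hU t htU
  obtain ⟨N0, hN0⟩ := exists_pow_lt_of_lt_one hε (show (2:ℝ)⁻¹ < 1 by norm_num)
  filter_upwards [eventually_ge_atTop N0] with N hN
  intro s hs
  apply hball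
  rw [Metric.mem_ball, Real.dist_eq]
  obtain ⟨hs1, hs2⟩ := hs
  obtain ⟨ht1, ht2⟩ := ht N
  rw [initSeg_length] at *
  have hmono : (2:ℝ)⁻¹ ^ N ≤ (2:ℝ)⁻¹ ^ N0 :=
    pow_le_pow_of_le_one (by norm_num) (by norm_num) hN
  rw [abs_lt]
  constructor <;> nlinarith

lemma limsup_top_of_pow (f : ℕ → ENNReal)
    (h : ∀ n : ℕ, ∃ᶠ N in atTop, (2:ENNReal) ^ n ≤ f N) :
    Filter.limsup f atTop = ⊤ := by
  by_contra hne
  obtain ⟨n, hn⟩ := ENNReal.exists_nat_gt hne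
  have h1 : (2:ENNReal) ^ n ≤ Filter.limsup f atTop :=
    Filter.le_limsup_of_frequently_le' (h n)
  have h2 : (n:ENNReal) ≤ 2 ^ n := by
    calc (n:ENNReal) ≤ ((2^n : ℕ) : ENNReal) := by exact_mod_cast (Nat.lt_two_pow_self (n := n)).le
      _ = 2 ^ n := by push_cast; ring
  exact absurd (h2.trans h1) (not_le.mpr hn)


theorem ville_converse (A : Set (ℕ → Bool)) (hA : MeasurableSet A) (h0 : muInf A = 0) :
    ∃ d : List Bool → NNReal,
      (∀ σ : List Bool, d (σ ++ [false]) + d (σ ++ [true]) = 2 * d σ) ∧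
      ∀ x ∈ A, limsup (fun N : ℕ => (d (initSeg x N) : ENNReal)) atTop = ⊤ := by
  -- translate the measure-zero hypothesis to the real line
  have hmu : muInf = Measure.map (fun t => fdig t) (volume.restrict (Set.Ico (0:ℝ) 1)) := rfl
  rw [hmu, Measure.map_apply fdig_meas hA] at h0
  rw [Measure.restrict_apply (fdig_meas hA)] at h0
  set B : Set ℝ := (fun t => fdig t) ⁻¹' A ∩ Set.Ico 0 1 with hB
  -- choose open covers
  have hex : ∀ k : ℕ, ∃ U ⊇ B, IsOpen U ∧ volume U < 2⁻¹ ^ (2*k) := by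
    intro k
    apply Set.exists_isOpen_lt_of_lt
    rw [h0]
    exact ENNReal.pow_pos (ENNReal.inv_pos.mpr (by norm_num)) _
  choose U hsub hopen hvol using hex
  have hvol' : ∀ k, volume (U k) ≤ 2⁻¹ ^ (2*k) := fun k => (hvol k).le
  have hfin : ∀ σ, Dfun U σ ≠ ⊤ := Dfun_ne_top U hvol'
  refine ⟨fun σ => (Dfun U σ).toNNReal, ?_, ?_⟩
  · intro σ
    have h1 := Dfun_mart U (fun k => (hopen k).measurableSet) σ
    have : ((((Dfun U (σ ++ [false])).toNNReal + (Dfun U (σ ++ [true])).toNNReal) : NNReal) : ENNReal)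
        = ((2 * (Dfun U σ).toNNReal : NNReal) : ENNReal) := by
      push_cast
      rw [ENNReal.coe_toNNReal (hfin _), ENNReal.coe_toNNReal (hfin _), h1,
        ENNReal.coe_toNNReal (hfin _)]
    exact_mod_cast this
  · intro x hxA
    have hco : (fun N : ℕ => (((Dfun U (initSeg x N)).toNNReal : NNReal) : ENNReal))
        = fun N => Dfun U (initSeg x N) := funext fun N => ENNReal.coe_toNNReal (hfin _)
    rw [hco]
    apply limsup_top_of_pow
    intro n
    apply Filter.Eventually.frequently
    by_cases hall : ∃ m, ∀ j, m ≤ j → x j = true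
    · obtain ⟨m, hm⟩ := hall
      filter_upwards [eventually_ge_atTop (2*m + n + 1)] with N hN
      have hg : gmart m (initSeg x N) = 2 ^ N * 2⁻¹ ^ (2*m) :=
        gmart_lower x m N hm (by omega)
      have hpow : (2:ENNReal) ^ N * 2⁻¹ ^ (2*m) = 2 ^ (N - 2*m) :=
        two_pow_mul_inv_pow_le N (2*m) (by omega)
      have hge : (2:ENNReal) ^ n ≤ gmart m (initSeg x N) := by
        rw [hg, hpow]
        exact pow_le_pow_right₀ one_le_two (by omega)
      calc (2:ENNReal) ^ n ≤ gmart m (initSeg x N) := hge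
        _ ≤ ∑' i, gmart i (initSeg x N) := ENNReal.le_tsum m
        _ ≤ Dfun U (initSeg x N) := le_add_self
    · push_neg at hall
      have hx : ∀ m, ∃ j, m ≤ j ∧ x j = false := by
        intro m
        obtain ⟨j, hj1, hj2⟩ := hall m
        exact ⟨j, hj1, by simpa using hj2⟩
      set t : ℝ := ∑' i, if x i then (2:ℝ)⁻¹ ^ (i+1) else 0 with h
      have ht : ∀ N, t ∈ dyad (initSeg x N) := tsum_mem_dyad x hx
      have htIco : t ∈ Set.Ico (0:ℝ) 1 := by
        have := ht 0
        rwa [show initSeg x 0 = [] from rfl, dyad_nil] at this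
      have hft : fdig t = x := fdig_eq_of_mem_dyad t x htIco ht
      have htB : t ∈ B := ⟨by simp only [Set.mem_preimage, hft]; exact hxA, htIco⟩
      have htU : t ∈ U n := hsub n htB
      filter_upwards [eventually_dyad_subset x t ht (U n) (hopen n) htU] with N hsubN
      have hdk : dkfun (U n) (initSeg x N) = 1 := dkfun_full (U n) _ hsubN
      calc (2:ENNReal) ^ n = 2 ^ n * dkfun (U n) (initSeg x N) := by rw [hdk, mul_one]
        _ ≤ ∑' k, 2 ^ k * dkfun (U k) (initSeg x N) := ENNReal.le_tsum n
        _ ≤ Dfun U (initSeg x N) := le_self_add
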